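/- arXiv:2207.06005 — 2 statements merged into one kernel-verified Lean document; each statement's English description precedes it below -/
import Mathlib

section
/- Let q be an odd positive integer and G a group. Then G⊗^q G ≅ ∇^q(G) × (G∧^q G). -/
/-!
Nonabelian tensor square modulo `q` (Conduché–Ellis / Brown–Loday for `q = 0`),
presented by generators `g ⊗ h` and `{(g,g)}` with the defining relations.
-/

namespace QTensor

/-- Generators of the `q`-tensor square: `t g h` stands for `g ⊗ h`,
and `d g` stands for the symbol `{(g,g)}`. -/
inductive Gen (G : Type) : Type
  | t : G → G → Gen G
  | d : G → Gen G

variable (G : Type) [Group G]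

/-- The word `g ⊗ h` in the free group on the generators. -/
def T (g h : G) : FreeGroup (Gen G) := FreeGroup.of (Gen.t g h)

/-- The word `{(g,g)}` in the free group on the generators. -/
def D (g : G) : FreeGroup (Gen G) := FreeGroup.of (Gen.d g)

/-- The word `∏_{i=1}^{q-1} (g⁻¹ ⊗ (^(g^(1-q+i)) g₁)^i)` appearing in relation (4). -/
def relProd (q : ℕ) (g g₁ : G) : FreeGroup (Gen G) :=
  ((List.range (q - 1)).map (fun j =>
    T G g⁻¹ ((g ^ ((1 : ℤ) - (q : ℤ) + (j + 1 : ℕ)) * g₁ *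
      (g ^ ((1 : ℤ) - (q : ℤ) + (j + 1 : ℕ)))⁻¹) ^ (j + 1)))).prod

/-- The defining relations of the `q`-tensor square.  For `q = 0` the symbols
`{(g,g)}` are killed, so that the group is the Brown–Loday nonabelian tensor
square generated by the `g ⊗ h` subject to relations (1) and (2). -/
def rels (q : ℕ) : Set (FreeGroup (Gen G)) :=
  {r | ∃ g g₁ h : G,
      r = T G (g * g₁) h * (T G (g * g₁ * g⁻¹) (g * h * g⁻¹) * T G g h)⁻¹} ∪
  {r | ∃ g h h₁ : G,
      r = T G g (h * h₁) * (T G g h * T G (h * g * h⁻¹) (h * h₁ * h⁻¹))⁻¹} ∪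
  {r | ∃ g g₁ h₁ : G,
      r = D G g * T G g₁ h₁ * (D G g)⁻¹ *
        (T G (g ^ q * g₁ * (g ^ q)⁻¹) (g ^ q * h₁ * (g ^ q)⁻¹))⁻¹} ∪
  {r | ∃ g g₁ : G,
      r = D G (g * g₁) * (D G g * relProd G q g g₁ * D G g₁)⁻¹} ∪
  {r | ∃ g g₁ : G,
      r = D G g * D G g₁ * (D G g)⁻¹ * (D G g₁)⁻¹ * (T G (g ^ q) (g₁ ^ q))⁻¹} ∪
  {r | ∃ g h : G,
      r = D G (g * h * g⁻¹ * h⁻¹) * ((T G g h) ^ q)⁻¹} ∪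
  {r | q = 0 ∧ ∃ g : G, r = D G g}

/-- The nonabelian tensor square modulo `q`, `G ⊗^q G`. -/
def tensorSquare (q : ℕ) : Type := PresentedGroup (rels G q)

instance (q : ℕ) : Group (tensorSquare G q) := by unfold tensorSquare; infer_instance

/-- The element `g ⊗ h` of `G ⊗^q G`. -/
def tmk (q : ℕ) (g h : G) : tensorSquare G q := PresentedGroup.of (Gen.t g h)

/-- The element `{(g,g)}` of `G ⊗^q G`. -/
def dmk (q : ℕ) (g : G) : tensorSquare G q := PresentedGroup.of (Gen.d g)

/-- `∇^q(G)`, the normal closure of the elements `g ⊗ g` in `G ⊗^q G`. -/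
def nabla (q : ℕ) : Subgroup (tensorSquare G q) :=
  Subgroup.normalClosure {x | ∃ g : G, x = tmk G q g g}

instance (q : ℕ) : (nabla G q).Normal := Subgroup.normalClosure_normal

/-- The exterior square modulo `q`, `G ∧^q G = (G ⊗^q G)/∇^q(G)`. -/
def extSquare (q : ℕ) : Type := tensorSquare G q ⧸ nabla G q

instance (q : ℕ) : Group (extSquare G q) := by unfold extSquare; infer_instance

/-- The element `g ∧ h` of `G ∧^q G`. -/
def wmk (q : ℕ) (g h : G) : extSquare G q := QuotientGroup.mk (tmk G q g h)

/-- The image of the symbol `{(g,g)}` in `G ∧^q G`. -/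
def dwmk (q : ℕ) (g : G) : extSquare G q := QuotientGroup.mk (dmk G q g)

/-- The exterior centre variant `Z^∧_q(G) = {g : g ∧ h = 1 for all h}` (as a set). -/
def Zext (q : ℕ) : Set G := {g | ∀ h : G, wmk G q g h = 1}

/-- `E^∧_q(G) = {g ∈ Z^∧_q(G) : {(g,g)} = 1 in G ∧^q G}` (as a set); for `q = 0`
the second condition is automatic, so `E^∧_0(G) = Z^∧(G)`. -/
def Eext (q : ℕ) : Set G := {g | (∀ h : G, wmk G q g h = 1) ∧ dwmk G q g = 1}

/-- The subgroup `G^q[G,G]` generated by all `q`-th powers and all commutators. -/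
def qPowComm (q : ℕ) : Subgroup G :=
  Subgroup.closure ({x | ∃ g : G, x = g ^ q} ∪ {x | ∃ a b : G, x = a * b * a⁻¹ * b⁻¹})

theorem pow_mem_qPowComm (q : ℕ) (g : G) : g ^ q ∈ qPowComm G q :=
  Subgroup.subset_closure (Or.inl ⟨g, rfl⟩)

theorem commutator_mem_qPowComm (q : ℕ) (a b : G) :
    a * b * a⁻¹ * b⁻¹ ∈ qPowComm G q :=
  Subgroup.subset_closure (Or.inr ⟨a, b, rfl⟩)

open scoped commutatorElement in
theorem mem_commutator (a b : G) : ⁅a, b⁆ ∈ commutator G :=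
  Subgroup.commutator_mem_commutator (Subgroup.mem_top a) (Subgroup.mem_top b)

/-- `M₀^q(G)`: the subgroup of `G ∧^q G` generated by the `x ∧ y` with `[x,y] = 1`.
(It is contained in the `q`-Schur multiplier `M^q(G)`.) -/
def M0 (q : ℕ) : Subgroup (extSquare G q) :=
  Subgroup.closure {x | ∃ a b : G, a * b = b * a ∧ x = wmk G q a b}

/-- `M̂₀^q(G)`: the subgroup of `G ∧^q G` generated by the `x ∧ y` with `[x,y] = 1`
together with the `{(g,g)}` with `g^q = 1`. -/
def M0hat (q : ℕ) : Subgroup (extSquare G q) :=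
  Subgroup.closure
    ({x | ∃ a b : G, a * b = b * a ∧ x = wmk G q a b} ∪
     {x | ∃ g : G, g ^ q = 1 ∧ x = dwmk G q g})

/-- A group `Q` is capable if `Q ≅ E/Z(E)` for some group `E`. -/
def Capable (Q : Type) [Group Q] : Prop :=
  ∃ (E : Type) (_ : Group E), Nonempty (Q ≃* E ⧸ Subgroup.center E)

end QTensor


namespace QTProof
open QTensor

variable {G : Type} [Group G] {q : ℕ}

/-- The quotient map from the free group to the tensor square. -/
def mkh (q : ℕ) (G : Type) [Group G] : FreeGroup (Gen G) →* tensorSquare G q :=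
  QuotientGroup.mk' (Subgroup.normalClosure (rels G q))

lemma mkh_T (g h : G) : mkh q G (T G g h) = tmk G q g h := rfl

lemma mkh_D (g : G) : mkh q G (D G g) = dmk G q g := rfl

lemma rel_eq_one {r : FreeGroup (Gen G)} (hr : r ∈ rels G q) : mkh q G r = 1 :=
  (QuotientGroup.eq_one_iff r).mpr (Subgroup.subset_normalClosure hr)

lemma R1 (g g₁ h : G) :
    tmk G q (g * g₁) h = tmk G q (g * g₁ * g⁻¹) (g * h * g⁻¹) * tmk G q g h := by
  have h1 := rel_eq_one (q := q)
    (Or.inl (Or.inl (Or.inl (Or.inl (Or.inl (Or.inl ⟨g, g₁, h, rfl⟩))))))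
  rw [map_mul, map_inv, map_mul, mkh_T, mkh_T, mkh_T, mul_inv_eq_one] at h1
  exact h1

lemma R2 (g h h₁ : G) :
    tmk G q g (h * h₁) = tmk G q g h * tmk G q (h * g * h⁻¹) (h * h₁ * h⁻¹) := by
  have h1 := rel_eq_one (q := q)
    (Or.inl (Or.inl (Or.inl (Or.inl (Or.inl (Or.inr ⟨g, h, h₁, rfl⟩))))))
  rw [map_mul, map_inv, map_mul, mkh_T, mkh_T, mkh_T, mul_inv_eq_one] at h1
  exact h1

lemma R3 (g g₁ h₁ : G) :
    dmk G q g * tmk G q g₁ h₁ * (dmk G q g)⁻¹ =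
      tmk G q (g ^ q * g₁ * (g ^ q)⁻¹) (g ^ q * h₁ * (g ^ q)⁻¹) := by
  have h1 := rel_eq_one (q := q)
    (Or.inl (Or.inl (Or.inl (Or.inl (Or.inr ⟨g, g₁, h₁, rfl⟩)))))
  rw [map_mul, map_inv, map_mul, map_inv, map_mul, mkh_T, mkh_T, mkh_D,
    mul_inv_eq_one] at h1
  exact h1

lemma R4 (g g₁ : G) :
    dmk G q (g * g₁) = dmk G q g * mkh q G (relProd G q g g₁) * dmk G q g₁ := by
  have h1 := rel_eq_one (q := q)
    (Or.inl (Or.inl (Or.inl (Or.inr ⟨g, g₁, rfl⟩))))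
  rw [map_mul, map_inv, map_mul, map_mul, mkh_D, mkh_D, mkh_D, mul_inv_eq_one] at h1
  exact h1

lemma R6 (g h : G) :
    dmk G q (g * h * g⁻¹ * h⁻¹) = (tmk G q g h) ^ q := by
  have h1 := rel_eq_one (q := q)
    (Or.inl (Or.inr ⟨g, h, rfl⟩))
  rw [map_mul, map_inv, map_pow, mkh_T, mkh_D, mul_inv_eq_one] at h1
  exact h1

lemma tcongr {a a' b b' : G} (ha : a = a') (hb : b = b') :
    tmk G q a b = tmk G q a' b' := by rw [ha, hb]

lemma t_one_left (h : G) : tmk G q 1 h = 1 := by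
  have h1 := R1 (q := q) (1 : G) 1 h
  simp only [one_mul, mul_one, inv_one] at h1
  have h2 : tmk G q 1 h * 1 = tmk G q 1 h * tmk G q 1 h := by rw [mul_one]; exact h1
  exact (mul_left_cancel h2).symm

lemma t_one_right (g : G) : tmk G q g 1 = 1 := by
  have h1 := R2 (q := q) g (1 : G) 1
  simp only [one_mul, mul_one, inv_one] at h1
  have h2 : tmk G q g 1 * 1 = tmk G q g 1 * tmk G q g 1 := by rw [mul_one]; exact h1
  exact (mul_left_cancel h2).symm


lemma N0 (g h x y : G) :
    tmk G q (g*h*x*(g*h)⁻¹) (g*h*y*(g*h)⁻¹) * tmk G q g h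
      = tmk G q g h * tmk G q (h*g*x*(h*g)⁻¹) (h*g*y*(h*g)⁻¹) := by
  have P1 : tmk G q (g * x) (h * y) =
      tmk G q (g*x*g⁻¹) (g*h*g⁻¹) *
        ((tmk G q (g*h*x*(g*h)⁻¹) (g*h*y*(g*h)⁻¹) * tmk G q g h) *
          tmk G q (h*g*h⁻¹) (h*y*h⁻¹)) := by
    rw [R1 g x (h*y), R2 g h y]
    rw [show g*(h*y)*g⁻¹ = (g*h*g⁻¹)*(g*y*g⁻¹) from by group]
    rw [R2 (g*x*g⁻¹) (g*h*g⁻¹) (g*y*g⁻¹)]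
    rw [show (g*h*g⁻¹)*(g*x*g⁻¹)*(g*h*g⁻¹)⁻¹ = g*h*x*(g*h)⁻¹ from by group]
    rw [show (g*h*g⁻¹)*(g*y*g⁻¹)*(g*h*g⁻¹)⁻¹ = g*h*y*(g*h)⁻¹ from by group]
    group
  have P2 : tmk G q (g * x) (h * y) =
      tmk G q (g*x*g⁻¹) (g*h*g⁻¹) *
        ((tmk G q g h * tmk G q (h*g*x*(h*g)⁻¹) (h*g*y*(h*g)⁻¹)) *
          tmk G q (h*g*h⁻¹) (h*y*h⁻¹)) := by
    rw [R2 (g*x) h y, R1 g x h]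
    rw [show h*(g*x)*h⁻¹ = (h*g*h⁻¹)*(h*x*h⁻¹) from by group]
    rw [R1 (h*g*h⁻¹) (h*x*h⁻¹) (h*y*h⁻¹)]
    rw [show (h*g*h⁻¹)*(h*x*h⁻¹)*(h*g*h⁻¹)⁻¹ = h*g*x*(h*g)⁻¹ from by group]
    rw [show (h*g*h⁻¹)*(h*y*h⁻¹)*(h*g*h⁻¹)⁻¹ = h*g*y*(h*g)⁻¹ from by group]
    group
  have h12 := P1.symm.trans P2
  have h3 := mul_left_cancel h12
  exact mul_right_cancel h3


lemma N1 (g h p r : G) :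
    tmk G q g h * tmk G q p r =
      tmk G q ((g*h*g⁻¹*h⁻¹)*p*(g*h*g⁻¹*h⁻¹)⁻¹) ((g*h*g⁻¹*h⁻¹)*r*(g*h*g⁻¹*h⁻¹)⁻¹) *
        tmk G q g h := by
  have h0 := N0 (q := q) g h ((h*g)⁻¹*p*(h*g)) ((h*g)⁻¹*r*(h*g))
  rw [show g*h*((h*g)⁻¹*p*(h*g))*(g*h)⁻¹ = (g*h*g⁻¹*h⁻¹)*p*(g*h*g⁻¹*h⁻¹)⁻¹ from by group,
      show g*h*((h*g)⁻¹*r*(h*g))*(g*h)⁻¹ = (g*h*g⁻¹*h⁻¹)*r*(g*h*g⁻¹*h⁻¹)⁻¹ from by group,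
      show h*g*((h*g)⁻¹*p*(h*g))*(h*g)⁻¹ = p from by group,
      show h*g*((h*g)⁻¹*r*(h*g))*(h*g)⁻¹ = r from by group] at h0
  exact h0.symm

lemma Ncomm (z p r : G) : Commute (tmk G q z z) (tmk G q p r) := by
  have h0 := N1 (q := q) z z p r
  rw [show (z*z*z⁻¹*z⁻¹)*p*(z*z*z⁻¹*z⁻¹)⁻¹ = p from by group,
      show (z*z*z⁻¹*z⁻¹)*r*(z*z*z⁻¹*z⁻¹)⁻¹ = r from by group] at h0
  exact h0

lemma commQt (a b p r : G) : Commute (tmk G q a b * tmk G q b a) (tmk G q p r) := by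
  show _ = _
  calc tmk G q a b * tmk G q b a * tmk G q p r
      = tmk G q a b * (tmk G q b a * tmk G q p r) := by rw [mul_assoc]
    _ = tmk G q a b *
          (tmk G q ((b*a*b⁻¹*a⁻¹)*p*(b*a*b⁻¹*a⁻¹)⁻¹) ((b*a*b⁻¹*a⁻¹)*r*(b*a*b⁻¹*a⁻¹)⁻¹) *
            tmk G q b a) := by rw [N1 b a p r]
    _ = (tmk G q a b *
          tmk G q ((b*a*b⁻¹*a⁻¹)*p*(b*a*b⁻¹*a⁻¹)⁻¹) ((b*a*b⁻¹*a⁻¹)*r*(b*a*b⁻¹*a⁻¹)⁻¹)) *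
            tmk G q b a := by rw [← mul_assoc]
    _ = (tmk G q ((a*b*a⁻¹*b⁻¹)*((b*a*b⁻¹*a⁻¹)*p*(b*a*b⁻¹*a⁻¹)⁻¹)*(a*b*a⁻¹*b⁻¹)⁻¹)
            ((a*b*a⁻¹*b⁻¹)*((b*a*b⁻¹*a⁻¹)*r*(b*a*b⁻¹*a⁻¹)⁻¹)*(a*b*a⁻¹*b⁻¹)⁻¹) *
          tmk G q a b) * tmk G q b a := by
        rw [N1 a b ((b*a*b⁻¹*a⁻¹)*p*(b*a*b⁻¹*a⁻¹)⁻¹) ((b*a*b⁻¹*a⁻¹)*r*(b*a*b⁻¹*a⁻¹)⁻¹)]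
    _ = tmk G q p r * (tmk G q a b * tmk G q b a) := by
        rw [show (a*b*a⁻¹*b⁻¹)*((b*a*b⁻¹*a⁻¹)*p*(b*a*b⁻¹*a⁻¹)⁻¹)*(a*b*a⁻¹*b⁻¹)⁻¹ = p from by group,
            show (a*b*a⁻¹*b⁻¹)*((b*a*b⁻¹*a⁻¹)*r*(b*a*b⁻¹*a⁻¹)⁻¹)*(a*b*a⁻¹*b⁻¹)⁻¹ = r from by group,
            mul_assoc]

lemma gswap (g h z : G) :
    tmk G q ((g*h)*z*(g*h)⁻¹) ((g*h)*z*(g*h)⁻¹) = tmk G q ((h*g)*z*(h*g)⁻¹) ((h*g)*z*(h*g)⁻¹) := by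
  have h0 := N0 (q := q) g h z z
  rw [show g*h*z*(g*h)⁻¹ = (g*h)*z*(g*h)⁻¹ from by group,
      show h*g*z*(h*g)⁻¹ = (h*g)*z*(h*g)⁻¹ from by group,
      (Ncomm ((g*h)*z*(g*h)⁻¹) g h).eq] at h0
  exact mul_left_cancel h0

lemma gconj_swap (v w u : G) :
    tmk G q ((v*w)*u*(v*w)⁻¹) ((v*w)*u*(v*w)⁻¹) = tmk G q ((w*v)*u*(w*v)⁻¹) ((w*v)*u*(w*v)⁻¹) :=
  gswap v w u

lemma star4 (u v : G) :
    tmk G q (u*v) (u*v) =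
      tmk G q (v*u*v⁻¹) (v*u*v⁻¹) * (tmk G q v v * (tmk G q u v * tmk G q v u)) := by
  have raw : tmk G q (u*v) (u*v) =
      tmk G q u v * (tmk G q (v*u*v⁻¹) (v*u*v⁻¹) * (tmk G q v v * tmk G q v u)) := by
    rw [show u*v = v*(v⁻¹*u*v) from by group]
    rw [R1 v (v⁻¹*u*v) (v*(v⁻¹*u*v))]
    rw [show v*(v⁻¹*u*v)*v⁻¹ = u from by group]
    rw [show v*(v*(v⁻¹*u*v))*v⁻¹ = v*u from by group]
    rw [R2 u v u]
    rw [R2 v v (v⁻¹*u*v)]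
    rw [show v*v*v⁻¹ = v from by group]
    rw [show v*(v⁻¹*u*v)*v⁻¹ = u from by group]
    rw [show v*u*v⁻¹ = v*u*v⁻¹ from rfl]
    group
  rw [raw, (Ncomm (v*u*v⁻¹) u v).symm.left_comm,
    (Ncomm v u v).symm.left_comm]

lemma alpha (x a b : G) :
    tmk G q (x*a) b * tmk G q b (x*a) =
      (tmk G q (x*a*x⁻¹) (x*b*x⁻¹) * tmk G q (x*b*x⁻¹) (x*a*x⁻¹)) *
        (tmk G q x b * tmk G q b x) := by
  rw [R1 x a b, R2 b x a]
  calc tmk G q (x*a*x⁻¹) (x*b*x⁻¹) * tmk G q x b * (tmk G q b x * tmk G q (x*b*x⁻¹) (x*a*x⁻¹))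
      = tmk G q (x*a*x⁻¹) (x*b*x⁻¹) * ((tmk G q x b * tmk G q b x) * tmk G q (x*b*x⁻¹) (x*a*x⁻¹)) := by
        group
    _ = tmk G q (x*a*x⁻¹) (x*b*x⁻¹) * (tmk G q (x*b*x⁻¹) (x*a*x⁻¹) * (tmk G q x b * tmk G q b x)) := by
        rw [(commQt x b (x*b*x⁻¹) (x*a*x⁻¹)).eq]
    _ = (tmk G q (x*a*x⁻¹) (x*b*x⁻¹) * tmk G q (x*b*x⁻¹) (x*a*x⁻¹)) * (tmk G q x b * tmk G q b x) := by
        group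

lemma beta (x a b : G) :
    tmk G q a (x*b) * tmk G q (x*b) a =
      (tmk G q a x * tmk G q x a) *
        (tmk G q (x*a*x⁻¹) (x*b*x⁻¹) * tmk G q (x*b*x⁻¹) (x*a*x⁻¹)) := by
  rw [R2 a x b, R1 x b a]
  calc tmk G q a x * tmk G q (x*a*x⁻¹) (x*b*x⁻¹) * (tmk G q (x*b*x⁻¹) (x*a*x⁻¹) * tmk G q x a)
      = tmk G q a x * ((tmk G q (x*a*x⁻¹) (x*b*x⁻¹) * tmk G q (x*b*x⁻¹) (x*a*x⁻¹)) * tmk G q x a) := by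
        group
    _ = tmk G q a x * (tmk G q x a * (tmk G q (x*a*x⁻¹) (x*b*x⁻¹) * tmk G q (x*b*x⁻¹) (x*a*x⁻¹))) := by
        rw [(commQt (x*a*x⁻¹) (x*b*x⁻¹) x a).eq]
    _ = (tmk G q a x * tmk G q x a) * (tmk G q (x*a*x⁻¹) (x*b*x⁻¹) * tmk G q (x*b*x⁻¹) (x*a*x⁻¹)) := by
        group


/-- Generating set: all tensor generators. -/
def TS (q : ℕ) (G : Type) [Group G] : Set (tensorSquare G q) :=
  {x | ∃ u v : G, x = tmk G q u v}

/-- Elements commuting with all tensor generators. -/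
def Csub (q : ℕ) (G : Type) [Group G] : Subgroup (tensorSquare G q) where
  carrier := {x | ∀ u v : G, Commute x (tmk G q u v)}
  one_mem' := fun u v => Commute.one_left _
  mul_mem' := fun ha hb u v => (ha u v).mul_left (hb u v)
  inv_mem' := fun ha u v => (ha u v).inv_left

def Hsub (q : ℕ) (G : Type) [Group G] : Subgroup (tensorSquare G q) :=
  Subgroup.closure (TS q G) ⊓ Csub q G

lemma comm_of_memH {x y : tensorSquare G q} (hx : x ∈ Hsub q G) (hy : y ∈ Hsub q G) :
    Commute x y := by
  refine Subgroup.closure_induction (k := TS q G)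
    (p := fun z _ => Commute x z) ?_ ?_ ?_ ?_ hy.1
  · rintro z ⟨u, v, rfl⟩
    exact hx.2 u v
  · exact Commute.one_right x
  · exact fun a b _ _ ha hb => ha.mul_right hb
  · exact fun a _ ha => ha.inv_right

instance : CommGroup ↥(Hsub q G) :=
  { (inferInstance : Group ↥(Hsub q G)) with
    mul_comm := fun a b => Subtype.ext (comm_of_memH a.2 b.2).eq }

lemma ga_memH (g : G) : tmk G q g g ∈ Hsub q G :=
  ⟨Subgroup.subset_closure ⟨g, g, rfl⟩, fun u v => Ncomm g u v⟩

lemma qq_memH (a b : G) : tmk G q a b * tmk G q b a ∈ Hsub q G :=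
  ⟨Subgroup.mul_mem _ (Subgroup.subset_closure ⟨a, b, rfl⟩)
      (Subgroup.subset_closure ⟨b, a, rfl⟩),
    fun u v => commQt a b u v⟩

/-- γ(g) = g ⊗ g as an element of the commutative subgroup. -/
def ga (q : ℕ) (G : Type) [Group G] (g : G) : ↥(Hsub q G) := ⟨tmk G q g g, ga_memH g⟩

/-- q(a,b) = (a⊗b)(b⊗a) as an element of the commutative subgroup. -/
def qq (q : ℕ) (G : Type) [Group G] (a b : G) : ↥(Hsub q G) :=
  ⟨tmk G q a b * tmk G q b a, qq_memH a b⟩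

lemma qq_diag (a : G) : qq q G a a = ga q G a * ga q G a := Subtype.ext rfl

lemma star4H (u v : G) :
    ga q G (u*v) = ga q G (v*u*v⁻¹) * ga q G v * qq q G u v := by
  apply Subtype.ext
  show tmk G q (u*v) (u*v) = tmk G q (v*u*v⁻¹) (v*u*v⁻¹) * tmk G q v v *
    (tmk G q u v * tmk G q v u)
  rw [star4]; group

lemma alphaH (x a b : G) :
    qq q G (x*a) b = qq q G (x*a*x⁻¹) (x*b*x⁻¹) * qq q G x b := by
  apply Subtype.ext
  show tmk G q (x*a) b * tmk G q b (x*a) =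
    (tmk G q (x*a*x⁻¹) (x*b*x⁻¹) * tmk G q (x*b*x⁻¹) (x*a*x⁻¹)) *
      (tmk G q x b * tmk G q b x)
  exact alpha x a b

lemma betaH (x a b : G) :
    qq q G a (x*b) = qq q G a x * qq q G (x*a*x⁻¹) (x*b*x⁻¹) := by
  apply Subtype.ext
  show tmk G q a (x*b) * tmk G q (x*b) a =
    (tmk G q a x * tmk G q x a) *
      (tmk G q (x*a*x⁻¹) (x*b*x⁻¹) * tmk G q (x*b*x⁻¹) (x*a*x⁻¹))
  exact beta x a b

lemma gswapH (g h z : G) :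
    ga q G ((g*h)*z*(g*h)⁻¹) = ga q G ((h*g)*z*(h*g)⁻¹) :=
  Subtype.ext (gswap g h z)

lemma gacongr {a b : G} (h : a = b) : ga q G a = ga q G b := by rw [h]

lemma qqcongr {a a' b b' : G} (h : a = a') (h' : b = b') : qq q G a b = qq q G a' b' := by
  rw [h, h']

/-- The square of γ is conjugation invariant. -/
lemma ga_sq_inv (w u : G) :
    ga q G (w*u*w⁻¹) * ga q G (w*u*w⁻¹) = ga q G u * ga q G u := by
  have E1 : ga q G ((u*u)*w) =
      (ga q G (w*u*w⁻¹) * ga q G (w*u*w⁻¹) * (ga q G (w*u*w⁻¹) * ga q G (w*u*w⁻¹))) *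
        ga q G w * (qq q G u (u*w*u⁻¹) * qq q G u w) := by
    rw [star4H (u*u) w]
    rw [gacongr (show w*(u*u)*w⁻¹ = (w*u*w⁻¹)*(w*u*w⁻¹) from by group)]
    rw [star4H (w*u*w⁻¹) (w*u*w⁻¹)]
    rw [gacongr (show (w*u*w⁻¹)*(w*u*w⁻¹)*(w*u*w⁻¹)⁻¹ = w*u*w⁻¹ from by group)]
    rw [qq_diag]
    rw [alphaH u u w]
    rw [qqcongr (show u*u*u⁻¹ = u from by group) (rfl : u*w*u⁻¹ = u*w*u⁻¹)]
    try simp only [mul_comm, mul_left_comm, mul_assoc]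
  have E2 : ga q G (u*(u*w)) =
      ga q G (w*u*w⁻¹) * (ga q G (w*u*w⁻¹) * ga q G w * qq q G u w) *
        (ga q G u * ga q G u * qq q G u (u*w*u⁻¹)) := by
    rw [star4H u (u*w)]
    rw [gacongr (show (u*w)*u*(u*w)⁻¹ = (u*w)*u*(u*w)⁻¹ from rfl)]
    rw [show ga q G ((u*w)*u*(u*w)⁻¹) = ga q G (w*u*w⁻¹) from by
      rw [gswapH u w u]; exact gacongr (by group)]
    rw [star4H u w]
    rw [betaH u u w]
    rw [qq_diag]
    rw [qqcongr (show u*u*u⁻¹ = u from by group) (rfl : u*w*u⁻¹ = u*w*u⁻¹)]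
    try simp only [mul_comm, mul_left_comm, mul_assoc]
  have hE : ga q G ((u*u)*w) = ga q G (u*(u*w)) := gacongr (by group)
  have h12 := (E1.symm.trans hE).trans E2
  have h2 : (ga q G (w*u*w⁻¹) * ga q G (w*u*w⁻¹)) *
      (ga q G (w*u*w⁻¹) * ga q G (w*u*w⁻¹) * ga q G w * (qq q G u (u*w*u⁻¹) * qq q G u w)) =
      (ga q G u * ga q G u) *
      (ga q G (w*u*w⁻¹) * ga q G (w*u*w⁻¹) * ga q G w * (qq q G u (u*w*u⁻¹) * qq q G u w)) := by
    calc (ga q G (w*u*w⁻¹) * ga q G (w*u*w⁻¹)) *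
        (ga q G (w*u*w⁻¹) * ga q G (w*u*w⁻¹) * ga q G w * (qq q G u (u*w*u⁻¹) * qq q G u w))
        = (ga q G (w*u*w⁻¹) * ga q G (w*u*w⁻¹) * (ga q G (w*u*w⁻¹) * ga q G (w*u*w⁻¹))) *
            ga q G w * (qq q G u (u*w*u⁻¹) * qq q G u w) := by
          simp only [mul_comm, mul_left_comm, mul_assoc]
      _ = ga q G (u*(u*w)) := by rw [← E1]; exact gacongr (by group)
      _ = ga q G (w*u*w⁻¹) * (ga q G (w*u*w⁻¹) * ga q G w * qq q G u w) *
            (ga q G u * ga q G u * qq q G u (u*w*u⁻¹)) := E2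
      _ = (ga q G u * ga q G u) *
            (ga q G (w*u*w⁻¹) * ga q G (w*u*w⁻¹) * ga q G w * (qq q G u (u*w*u⁻¹) * qq q G u w)) := by
          simp only [mul_comm, mul_left_comm, mul_assoc]
  exact mul_right_cancel h2


lemma d_one : dmk G q (1 : G) = 1 := by
  have hp : mkh q G (relProd G q 1 1) = 1 := by
    rw [relProd, map_list_prod, List.map_map]
    apply List.prod_eq_one
    intro x hx
    rw [List.mem_map] at hx
    obtain ⟨j, -, rfl⟩ := hx
    show mkh q G (T G (1:G)⁻¹ _) = 1
    rw [mkh_T, inv_one]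
    exact t_one_left _
  have h4 := R4 (q := q) (1 : G) 1
  rw [hp, one_mul, mul_one] at h4
  have h2 : dmk G q (1:G) * 1 = dmk G q 1 * dmk G q 1 := by rw [mul_one]; exact h4
  exact (mul_left_cancel h2).symm

lemma ga_pow_q (g : G) : (tmk G q g g) ^ q = 1 := by
  have h6 := R6 (q := q) g g
  rw [show g*g*g⁻¹*g⁻¹ = (1:G) from by group, d_one] at h6
  exact h6.symm

lemma gaH_pow_q (g : G) : (ga q G g) ^ q = 1 := by
  apply Subtype.ext
  show ((ga q G g : tensorSquare G q)) ^ q = 1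
  · exact ga_pow_q g

/-- Full conjugation invariance of γ, for odd `q`. -/
lemma gaInvH (hq : Odd q) (w u : G) : ga q G (w*u*w⁻¹) = ga q G u := by
  obtain ⟨k, hk⟩ := hq
  set x := ga q G (w*u*w⁻¹)
  set y := ga q G u
  have hsq : x * x = y * y := ga_sq_inv w u
  have hx : x ^ (q + 1) = x := by
    rw [pow_succ, gaH_pow_q, one_mul]
  have hy : y ^ (q + 1) = y := by
    rw [pow_succ, gaH_pow_q, one_mul]
  calc x = x ^ (q+1) := hx.symm
    _ = (x * x) ^ (k+1) := by
      rw [← pow_two, ← pow_mul]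
      congr 1
      omega
    _ = (y * y) ^ (k+1) := by rw [hsq]
    _ = y ^ (q+1) := by
      rw [← pow_two, ← pow_mul]
      congr 1
      omega
    _ = y := hy

lemma gaInv (hq : Odd q) (w u : G) :
    tmk G q (w*u*w⁻¹) (w*u*w⁻¹) = tmk G q u u :=
  congrArg Subtype.val (gaInvH hq w u)

/-- γ(g) is central in the whole q-tensor square. -/
lemma ga_central (hq : Odd q) (g : G) (k : tensorSquare G q) :
    Commute (tmk G q g g) k := by
  induction k using QuotientGroup.induction_on with
  | H w =>
  show Commute _ (mkh q G w)
  induction w using FreeGroup.induction_on with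
  | C1 => rw [map_one]; exact Commute.one_right _
  | of x =>
      cases x with
      | t u v => exact Ncomm g u v
      | d u =>
          show Commute (tmk G q g g) (dmk G q u)
          have h3 := R3 (q := q) u g g
          rw [gaInv hq (u ^ q) g] at h3
          have : dmk G q u * tmk G q g g = tmk G q g g * dmk G q u := by
            calc dmk G q u * tmk G q g g
                = dmk G q u * tmk G q g g * (dmk G q u)⁻¹ * dmk G q u := by group
              _ = tmk G q g g * dmk G q u := by rw [h3]
          exact this.symm
  | inv_of x ih => rw [map_inv]; exact ih.inv_right
  | mul a b iha ihb => rw [map_mul]; exact iha.mul_right ihb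


lemma QformH (hq : Odd q) (u v : G) :
    qq q G u v = (ga q G u * ga q G v)⁻¹ * ga q G (u*v) := by
  have h := star4H (q := q) (G := G) u v
  rw [gaInvH hq v u] at h
  rw [h]; group

lemma qq_conj_inv (hq : Odd q) (x a b : G) :
    qq q G (x*a*x⁻¹) (x*b*x⁻¹) = qq q G a b := by
  rw [QformH hq, QformH hq, gaInvH hq x a, gaInvH hq x b,
    gacongr (show (x*a*x⁻¹)*(x*b*x⁻¹) = x*(a*b)*x⁻¹ from by group), gaInvH hq x (a*b)]

lemma qq_add1 (hq : Odd q) (x a b : G) :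
    qq q G (x*a) b = qq q G x b * qq q G a b := by
  rw [alphaH, qq_conj_inv hq]; exact mul_comm _ _

lemma qq_add2 (hq : Odd q) (a x b : G) :
    qq q G a (x*b) = qq q G a x * qq q G a b := by
  rw [betaH, qq_conj_inv hq]

lemma qq_one_left (b : G) : qq q G 1 b = 1 := by
  apply Subtype.ext
  show tmk G q 1 b * tmk G q b 1 = 1
  rw [t_one_left, t_one_right, one_mul]

lemma qq_one_right (a : G) : qq q G a 1 = 1 := by
  apply Subtype.ext
  show tmk G q a 1 * tmk G q 1 a = 1
  rw [t_one_left, t_one_right, one_mul]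

lemma qq_pow_right (hq : Odd q) (a b : G) (n : ℕ) :
    qq q G a (b^n) = qq q G a b ^ n := by
  induction n with
  | zero => rw [pow_zero, pow_zero]; exact qq_one_right a
  | succ n ih =>
      rw [pow_succ, qq_add2 hq a (b^n) b, ih, pow_succ]

lemma qq_pow_left (hq : Odd q) (a b : G) (n : ℕ) :
    qq q G (a^n) b = qq q G a b ^ n := by
  induction n with
  | zero => rw [pow_zero, pow_zero]; exact qq_one_left b
  | succ n ih =>
      rw [pow_succ, qq_add1 hq (a^n) a b, ih, pow_succ]

lemma qq_inv_left (hq : Odd q) (a b : G) : qq q G a⁻¹ b = (qq q G a b)⁻¹ := by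
  have h := qq_add1 hq a⁻¹ a b
  rw [qqcongr (inv_mul_cancel a) rfl, qq_one_left] at h
  exact eq_inv_of_mul_eq_one_left h.symm

lemma qq_pow_q (hq : Odd q) (a b : G) : qq q G a b ^ q = 1 := by
  rw [QformH hq, mul_pow, inv_pow, mul_pow, gaH_pow_q, gaH_pow_q, gaH_pow_q]
  simp

lemma nabla_eq (hq : Odd q) :
    nabla G q = Subgroup.closure {x | ∃ g : G, x = tmk G q g g} := by
  apply le_antisymm
  · haveI hN : (Subgroup.closure {x : tensorSquare G q | ∃ g : G, x = tmk G q g g}).Normal := by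
      constructor
      intro n hn g
      have hc : ∀ k, Commute n k := by
        refine Subgroup.closure_induction (p := fun z _ => ∀ k, Commute z k) ?_ ?_ ?_ ?_ hn
        · rintro z ⟨u, rfl⟩ k; exact ga_central hq u k
        · intro k; exact Commute.one_left k
        · intro a b _ _ ha hb k; exact (ha k).mul_left (hb k)
        · intro a _ ha k; exact (ha k).inv_left
      have he : g * n * g⁻¹ = n := by
        rw [(hc g).symm.eq]; group
      rw [he]; exact hn
    exact Subgroup.normalClosure_le_normal Subgroup.subset_closure
  · exact Subgroup.closure_le_normalClosure

lemma qq_mem_nabla (hq : Odd q) (u v : G) :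
    tmk G q u v * tmk G q v u ∈ nabla G q := by
  rw [nabla_eq hq]
  have hf : tmk G q u v * tmk G q v u =
      (tmk G q u u * tmk G q v v)⁻¹ * tmk G q (u*v) (u*v) := by
    have := congrArg Subtype.val (QformH hq u v)
    push_cast at this
    exact this
  rw [hf]
  refine Subgroup.mul_mem _ (Subgroup.inv_mem _ (Subgroup.mul_mem _ ?_ ?_)) ?_
  · exact Subgroup.subset_closure ⟨u, rfl⟩
  · exact Subgroup.subset_closure ⟨v, rfl⟩
  · exact Subgroup.subset_closure ⟨u*v, rfl⟩


lemma qq_coe (a b : G) : ((qq q G a b : tensorSquare G q)) = tmk G q a b * tmk G q b a := rfl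

lemma ga_coe (g : G) : ((ga q G g : tensorSquare G q)) = tmk G q g g := rfl

lemma prod_pow_list {M : Type*} [Monoid M] (c : M) (F : ℕ → ℕ) :
    ∀ n : ℕ, ((List.range n).map (fun j => c ^ F j)).prod = c ^ (((List.range n).map F).sum)
  | 0 => by simp
  | (n+1) => by
      rw [List.range_succ, List.map_append, List.map_append, List.prod_append,
        List.sum_append, prod_pow_list c F n]
      simp [pow_add]

lemma two_mul_sum (m : ℕ) : ∀ n : ℕ,
    2 * (((List.range n).map (fun j => (j+1)*m)).sum) = n*(n+1)*m
  | 0 => by simp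
  | (n+1) => by
      rw [List.range_succ, List.map_append, List.sum_append, Nat.mul_add, two_mul_sum m n]
      simp only [List.map_cons, List.map_nil, List.sum_cons, List.sum_nil]
      ring

/-- The function defining the retraction `G ⊗^q G → ∇^q(G)`. -/
def fval (q : ℕ) (G : Type) [Group G] : Gen G → tensorSquare G q
  | .t g h => (tmk G q g h * tmk G q h g) ^ ((q+1)/2)
  | .d _ => 1

lemma lift_fval_T (g h : G) :
    FreeGroup.lift (fval q G) (T G g h) = (tmk G q g h * tmk G q h g) ^ ((q+1)/2) := by
  simp [T, fval]

lemma lift_fval_D (g : G) : FreeGroup.lift (fval q G) (D G g) = 1 := by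
  simp [D, fval]

lemma lift_relProd (hq : Odd q) (hq0 : 0 < q) (g g₁ : G) :
    FreeGroup.lift (fval q G) (relProd G q g g₁) = 1 := by
  obtain ⟨k, hk⟩ := hq
  set m := (q+1)/2 with hm
  set c0 : ↥(Hsub q G) := (qq q G g g₁)⁻¹ with hc0
  rw [relProd, map_list_prod, List.map_map]
  have hfac : (FreeGroup.lift (fval q G) ∘ fun j =>
      T G g⁻¹ ((g ^ ((1 : ℤ) - (q : ℤ) + (j + 1 : ℕ)) * g₁ *
        (g ^ ((1 : ℤ) - (q : ℤ) + (j + 1 : ℕ)))⁻¹) ^ (j + 1))) =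
      fun j => (((Hsub q G).subtype) (c0 ^ ((j+1)*m))) := by
    funext j
    show FreeGroup.lift (fval q G) (T G g⁻¹ _) = _
    rw [lift_fval_T]
    set z : ℤ := (1 : ℤ) - (q : ℤ) + (j + 1 : ℕ) with hz
    have h1 : qq q G g⁻¹ ((g ^ z * g₁ * (g ^ z)⁻¹) ^ (j+1)) =
        (qq q G g⁻¹ (g ^ z * g₁ * (g ^ z)⁻¹)) ^ (j+1) := qq_pow_right ⟨k, hk⟩ _ _ _
    have h2 : qq q G g⁻¹ (g ^ z * g₁ * (g ^ z)⁻¹) = qq q G g⁻¹ g₁ := by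
      have h3 := qq_conj_inv (q := q) ⟨k, hk⟩ (g ^ z) g⁻¹ g₁
      rw [qqcongr (show g ^ z * g⁻¹ * (g ^ z)⁻¹ = g⁻¹ from by group) rfl] at h3
      exact h3
    have h4 : qq q G g⁻¹ g₁ = c0 := by rw [hc0, qq_inv_left ⟨k, hk⟩]
    have : (tmk G q g⁻¹ ((g ^ z * g₁ * (g ^ z)⁻¹) ^ (j+1)) *
        tmk G q ((g ^ z * g₁ * (g ^ z)⁻¹) ^ (j+1)) g⁻¹) = ((Hsub q G).subtype)
          (qq q G g⁻¹ ((g ^ z * g₁ * (g ^ z)⁻¹) ^ (j+1))) := rfl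
    rw [this, h1, h2, h4, ← map_pow, ← pow_mul]
  rw [hfac]
  have hsubt : (List.map (fun j => (Hsub q G).subtype (c0 ^ ((j+1)*m))) (List.range (q-1))).prod
      = (Hsub q G).subtype (((List.range (q-1)).map (fun j => c0 ^ ((j+1)*m))).prod) := by
    rw [map_list_prod, List.map_map]
    rfl
  rw [hsubt, prod_pow_list]
  have hsum : ((List.range (q-1)).map (fun j => (j+1)*m)).sum = q * (k * m) := by
    have h2 := two_mul_sum m (q-1)
    have hq1 : q - 1 + 1 = q := by omega
    rw [hq1] at h2
    have : (q-1)*q*m = 2*(q*(k*m)) := by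
      have : q - 1 = 2*k := by omega
      rw [this]; ring
    rw [this] at h2
    exact Nat.eq_of_mul_eq_mul_left (by norm_num) h2
  rw [hsum, pow_mul, hc0, inv_pow, qq_pow_q ⟨k, hk⟩, inv_one, one_pow, map_one]

lemma hrels (hq : Odd q) (hq0 : 0 < q) :
    ∀ r ∈ rels G q, FreeGroup.lift (fval q G) r = 1 := by
  rintro r ((((((⟨g, g₁, h, rfl⟩ | ⟨g, h, h₁, rfl⟩) | ⟨g, g₁, h₁, rfl⟩) | ⟨g, g₁, rfl⟩) |
    ⟨g, g₁, rfl⟩) | ⟨g, h, rfl⟩) | ⟨h0, g, rfl⟩)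
  · rw [map_mul, map_inv, map_mul, lift_fval_T, lift_fval_T, lift_fval_T, mul_inv_eq_one]
    have hH : qq q G (g*g₁) h ^ ((q+1)/2) =
        qq q G (g*g₁*g⁻¹) (g*h*g⁻¹) ^ ((q+1)/2) * qq q G g h ^ ((q+1)/2) := by
      rw [alphaH g g₁ h, mul_pow]
    have hK := congrArg Subtype.val hH
    push_cast [qq_coe] at hK
    exact_mod_cast hK
  · rw [map_mul, map_inv, map_mul, lift_fval_T, lift_fval_T, lift_fval_T, mul_inv_eq_one]
    have hH : qq q G g (h*h₁) ^ ((q+1)/2) =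
        qq q G g h ^ ((q+1)/2) * qq q G (h*g*h⁻¹) (h*h₁*h⁻¹) ^ ((q+1)/2) := by
      rw [betaH h g h₁, mul_pow]
    have hK := congrArg Subtype.val hH
    push_cast [qq_coe] at hK
    exact_mod_cast hK
  · rw [map_mul, map_inv, map_mul, map_inv, map_mul, lift_fval_T, lift_fval_T, lift_fval_D]
    rw [one_mul, inv_one, mul_one, mul_inv_eq_one]
    have hH : qq q G g₁ h₁ ^ ((q+1)/2) =
        qq q G (g^q*g₁*(g^q)⁻¹) (g^q*h₁*(g^q)⁻¹) ^ ((q+1)/2) := by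
      rw [qq_conj_inv hq (g^q) g₁ h₁]
    have hK := congrArg Subtype.val hH
    push_cast [qq_coe] at hK
    exact_mod_cast hK
  · rw [map_mul, map_inv, map_mul, map_mul, lift_fval_D, lift_fval_D, lift_fval_D,
      lift_relProd hq hq0 g g₁]
    simp
  · simp only [map_mul, map_inv, lift_fval_D, lift_fval_T, one_mul, mul_one, inv_one]
    rw [inv_eq_one]
    have hH : qq q G (g^q) (g₁^q) ^ ((q+1)/2) = 1 := by
      rw [qq_pow_left hq, qq_pow_q hq, one_pow]
    have hK := congrArg Subtype.val hH
    push_cast [qq_coe] at hK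
    exact_mod_cast hK
  · simp only [map_mul, map_inv, map_pow, lift_fval_T, lift_fval_D, one_mul]
    rw [inv_eq_one]
    have hH : (qq q G g h ^ ((q+1)/2)) ^ q = 1 := by
      rw [← pow_mul, mul_comm ((q+1)/2) q, pow_mul, qq_pow_q hq, one_pow]
    have hK := congrArg Subtype.val hH
    push_cast [qq_coe] at hK
    exact_mod_cast hK
  · exact absurd h0 (by omega)

/-- The retraction homomorphism onto `∇^q(G)`. -/
def phihat (hq : Odd q) (hq0 : 0 < q) : tensorSquare G q →* tensorSquare G q :=
  PresentedGroup.toGroup (hrels hq hq0)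

lemma phihat_t (hq : Odd q) (hq0 : 0 < q) (g h : G) :
    phihat hq hq0 (tmk G q g h) = (tmk G q g h * tmk G q h g) ^ ((q+1)/2) :=
  PresentedGroup.toGroup.of (hrels hq hq0)

lemma phihat_d (hq : Odd q) (hq0 : 0 < q) (g : G) :
    phihat hq hq0 (dmk G q g) = 1 :=
  PresentedGroup.toGroup.of (hrels hq hq0)

lemma phihat_mem (hq : Odd q) (hq0 : 0 < q) (x : tensorSquare G q) :
    phihat hq hq0 x ∈ nabla G q := by
  induction x using QuotientGroup.induction_on with
  | H w =>
  show phihat hq hq0 (mkh q G w) ∈ nabla G q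
  induction w using FreeGroup.induction_on with
  | C1 => rw [map_one, map_one]; exact Subgroup.one_mem _
  | of x =>
      cases x with
      | t u v =>
          show phihat hq hq0 (tmk G q u v) ∈ nabla G q
          rw [phihat_t hq hq0]
          exact Subgroup.pow_mem _ (qq_mem_nabla hq u v) _
      | d u =>
          show phihat hq hq0 (dmk G q u) ∈ nabla G q
          rw [phihat_d hq hq0]
          exact Subgroup.one_mem _
  | inv_of x ih =>
      rw [map_inv, map_inv]
      exact Subgroup.inv_mem _ ih
  | mul a b iha ihb =>
      rw [map_mul, map_mul]
      exact Subgroup.mul_mem _ iha ihb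

lemma phihat_fix (hq : Odd q) (hq0 : 0 < q) {x : tensorSquare G q} (hx : x ∈ nabla G q) :
    phihat hq hq0 x = x := by
  rw [nabla_eq hq] at hx
  refine Subgroup.closure_induction (p := fun z _ => phihat hq hq0 z = z) ?_ ?_ ?_ ?_ hx
  · rintro z ⟨g, rfl⟩
    rw [phihat_t hq hq0]
    obtain ⟨k, hk⟩ := hq
    calc (tmk G q g g * tmk G q g g) ^ ((q+1)/2)
        = (tmk G q g g ^ 2) ^ ((q+1)/2) := by rw [pow_two]
      _ = tmk G q g g ^ (2 * ((q+1)/2)) := by rw [← pow_mul]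
      _ = tmk G q g g ^ (q + 1) := by congr 1; omega
      _ = tmk G q g g ^ q * tmk G q g g := by rw [pow_succ]
      _ = tmk G q g g := by rw [ga_pow_q, one_mul]
  · exact map_one _
  · intro a b _ _ ha hb; rw [map_mul, ha, hb]
  · intro a _ ha; rw [map_inv, ha]

end QTProof

open QTensor in
/-- For odd positive `q`, `G ⊗^q G ≅ ∇^q(G) × (G ∧^q G)`. -/
theorem tensorSquare_iso_nabla_prod_extSquare_of_odd (q : ℕ) (hq : Odd q)
    (hq' : 0 < q) (G : Type) [Group G] :
    Nonempty (tensorSquare G q ≃* (nabla G q) × extSquare G q) := by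
  refine ⟨?_⟩
  let phi : tensorSquare G q →* tensorSquare G q := QTProof.phihat hq hq'
  let Phi : tensorSquare G q →* ↥(nabla G q) × extSquare G q :=
    MonoidHom.prod (phi.codRestrict (nabla G q) (QTProof.phihat_mem hq hq'))
      (QuotientGroup.mk' (nabla G q))
  refine MulEquiv.ofBijective Phi ⟨?_, ?_⟩
  · rw [injective_iff_map_eq_one]
    intro a ha
    have h2 : QuotientGroup.mk' (nabla G q) a = 1 := congrArg Prod.snd ha
    have h3 : a ∈ nabla G q := (QuotientGroup.eq_one_iff a).mp h2
    have h4 : phi a = 1 := congrArg Subtype.val (congrArg Prod.fst ha)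
    rw [← QTProof.phihat_fix hq hq' h3]
    exact h4
  · rintro ⟨n, e⟩
    obtain ⟨k, rfl⟩ := QuotientGroup.mk'_surjective (nabla G q) e
    refine ⟨k * (phi k)⁻¹ * (n : tensorSquare G q), ?_⟩
    have hn : (n : tensorSquare G q) ∈ nabla G q := n.2
    have hk' : phi k ∈ nabla G q := QTProof.phihat_mem hq hq' k
    have comp1 : phi (k * (phi k)⁻¹ * (n : tensorSquare G q)) = (n : tensorSquare G q) := by
      rw [map_mul, map_mul, map_inv, QTProof.phihat_fix hq hq' hk', QTProof.phihat_fix hq hq' hn]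
      group
    have comp2 : QuotientGroup.mk' (nabla G q) (k * (phi k)⁻¹ * (n : tensorSquare G q)) =
        QuotientGroup.mk' (nabla G q) k := by
      rw [map_mul, map_mul, map_inv]
      have e1 : QuotientGroup.mk' (nabla G q) (phi k) = 1 :=
        (QuotientGroup.eq_one_iff _).mpr hk'
      have e2 : QuotientGroup.mk' (nabla G q) ((n : tensorSquare G q)) = 1 :=
        (QuotientGroup.eq_one_iff _).mpr hn
      rw [e1, e2]
      group
    exact Prod.ext (Subtype.ext comp1) comp2
end

section
/- Let q ≥ 0 be an integer and G a group. For all g, h, g₁, h₁ ∈ G, the following identity holds in G⊗^q G: [g⊗h, g₁⊗h₁] = [g,h]⊗[g₁,h₁], where the left-hand bracket is the commutator in G⊗^q G and [g,h] = ghg⁻¹h⁻¹ in G. -/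
/-!
Nonabelian tensor square modulo `q` (Conduché–Ellis / Brown–Loday for `q = 0`),
presented by generators `g ⊗ h` and `{(g,g)}` with the defining relations.
-/

namespace QTensor

variable (G : Type) [Group G]

lemma mk_eq_one {G : Type} [Group G] {q : ℕ} {r : FreeGroup (Gen G)} (h : r ∈ rels G q) :
    PresentedGroup.mk (rels G q) r = 1 := by
  apply (QuotientGroup.eq_one_iff r).mpr
  exact Subgroup.subset_normalClosure h

lemma rel1 {G : Type} [Group G] (q : ℕ) (g g₁ h : G) :
    tmk G q (g * g₁) h = tmk G q (g * g₁ * g⁻¹) (g * h * g⁻¹) * tmk G q g h := by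
  have h1 : PresentedGroup.mk (rels G q)
      (T G (g * g₁) h * (T G (g * g₁ * g⁻¹) (g * h * g⁻¹) * T G g h)⁻¹) = 1 :=
    mk_eq_one (by left; left; left; left; left; left; exact ⟨g, g₁, h, rfl⟩)
  simp only [map_mul, map_inv, mul_inv_eq_one] at h1
  exact h1

lemma rel2 {G : Type} [Group G] (q : ℕ) (g h h₁ : G) :
    tmk G q g (h * h₁) = tmk G q g h * tmk G q (h * g * h⁻¹) (h * h₁ * h⁻¹) := by
  have h1 : PresentedGroup.mk (rels G q)
      (T G g (h * h₁) * (T G g h * T G (h * g * h⁻¹) (h * h₁ * h⁻¹))⁻¹) = 1 :=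
    mk_eq_one (by left; left; left; left; left; right; exact ⟨g, h, h₁, rfl⟩)
  simp only [map_mul, map_inv, mul_inv_eq_one] at h1
  exact h1




lemma tcongr {G : Type} [Group G] (q : ℕ) {a a' b b' : G} (h1 : a = a') (h2 : b = b') :
    tmk G q a b = tmk G q a' b' := by rw [h1, h2]

/-- `(^{gh}a ⊗ ^{gh}b)(g⊗h) = (g⊗h)(^{hg}a ⊗ ^{hg}b)`. -/
lemma swap_conj {G : Type} [Group G] (q : ℕ) (g h a b : G) :
    tmk G q ((g*h)*a*(g*h)⁻¹) ((g*h)*b*(g*h)⁻¹) * tmk G q g h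
      = tmk G q g h * tmk G q ((h*g)*a*(h*g)⁻¹) ((h*g)*b*(h*g)⁻¹) := by
  have e1 := rel1 q g a (h*b)
  have e2 := rel2 q g h b
  have e3 : tmk G q (g*a*g⁻¹) (g*(h*b)*g⁻¹)
      = tmk G q (g*a*g⁻¹) (g*h*g⁻¹)
        * tmk G q ((g*h)*a*(g*h)⁻¹) ((g*h)*b*(g*h)⁻¹) := by
    have e := rel2 q (g*a*g⁻¹) (g*h*g⁻¹) (g*b*g⁻¹)
    rw [tcongr q (show (g*h*g⁻¹)*(g*a*g⁻¹)*(g*h*g⁻¹)⁻¹ = (g*h)*a*(g*h)⁻¹ by group)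
          (show (g*h*g⁻¹)*(g*b*g⁻¹)*(g*h*g⁻¹)⁻¹ = (g*h)*b*(g*h)⁻¹ by group),
        tcongr q (rfl : g*a*g⁻¹ = g*a*g⁻¹)
          (show (g*h*g⁻¹)*(g*b*g⁻¹) = g*(h*b)*g⁻¹ by group)] at e
    exact e
  have f1 := rel2 q (g*a) h b
  have f2 := rel1 q g a h
  have f3 : tmk G q (h*(g*a)*h⁻¹) (h*b*h⁻¹)
      = tmk G q ((h*g)*a*(h*g)⁻¹) ((h*g)*b*(h*g)⁻¹)
        * tmk G q (h*g*h⁻¹) (h*b*h⁻¹) := by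
    have e := rel1 q (h*g*h⁻¹) (h*a*h⁻¹) (h*b*h⁻¹)
    rw [tcongr q (show (h*g*h⁻¹)*(h*a*h⁻¹)*(h*g*h⁻¹)⁻¹ = (h*g)*a*(h*g)⁻¹ by group)
          (show (h*g*h⁻¹)*(h*b*h⁻¹)*(h*g*h⁻¹)⁻¹ = (h*g)*b*(h*g)⁻¹ by group),
        tcongr q (show (h*g*h⁻¹)*(h*a*h⁻¹) = h*(g*a)*h⁻¹ by group)
          (rfl : h*b*h⁻¹ = h*b*h⁻¹)] at e
    exact e
  have w1 : tmk G q (g*a) (h*b)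
      = tmk G q (g*a*g⁻¹) (g*h*g⁻¹)
        * (tmk G q ((g*h)*a*(g*h)⁻¹) ((g*h)*b*(g*h)⁻¹)
          * (tmk G q g h * tmk G q (h*g*h⁻¹) (h*b*h⁻¹))) := by
    rw [e1, e3, e2]; group
  have w2 : tmk G q (g*a) (h*b)
      = tmk G q (g*a*g⁻¹) (g*h*g⁻¹)
        * (tmk G q g h
          * (tmk G q ((h*g)*a*(h*g)⁻¹) ((h*g)*b*(h*g)⁻¹)
            * tmk G q (h*g*h⁻¹) (h*b*h⁻¹))) := by
    rw [f1, f2, f3]; group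
  have key2 := mul_left_cancel (w1.symm.trans w2)
  rw [← mul_assoc, ← mul_assoc] at key2
  exact mul_right_cancel key2

/-- Conjugation: `(^{[g,h]}a ⊗ ^{[g,h]}b)(g⊗h) = (g⊗h)(a⊗b)`. -/
lemma conj_tmk {G : Type} [Group G] (q : ℕ) (g h a b : G) :
    tmk G q ((g*h*g⁻¹*h⁻¹)*a*(g*h*g⁻¹*h⁻¹)⁻¹) ((g*h*g⁻¹*h⁻¹)*b*(g*h*g⁻¹*h⁻¹)⁻¹)
        * tmk G q g h
      = tmk G q g h * tmk G q a b := by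
  have e := swap_conj q g h ((h*g)⁻¹*a*(h*g)) ((h*g)⁻¹*b*(h*g))
  rw [tcongr q (show (h*g)*((h*g)⁻¹*a*(h*g))*(h*g)⁻¹ = a by group)
        (show (h*g)*((h*g)⁻¹*b*(h*g))*(h*g)⁻¹ = b by group),
      tcongr q
        (show (g*h)*((h*g)⁻¹*a*(h*g))*(g*h)⁻¹
            = (g*h*g⁻¹*h⁻¹)*a*(g*h*g⁻¹*h⁻¹)⁻¹ by group)
        (show (g*h)*((h*g)⁻¹*b*(h*g))*(g*h)⁻¹
            = (g*h*g⁻¹*h⁻¹)*b*(g*h*g⁻¹*h⁻¹)⁻¹ by group)] at e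
  exact e

/-- `^c a ⊗ ^c b = (c ⊗ [a,b])(a ⊗ b)`. -/
lemma conj_eq_tmk_commutator {G : Type} [Group G] (q : ℕ) (c a b : G) :
    tmk G q (c*a*c⁻¹) (c*b*c⁻¹)
      = tmk G q c (a*b*a⁻¹*b⁻¹) * tmk G q a b := by
  have E1 := rel1 q c a b
  have E2 : tmk G q (c*a) b = tmk G q c (a*b*a⁻¹) * tmk G q a b := by
    have e := rel1 q a (a⁻¹*c*a) b
    rw [tcongr q (show a*(a⁻¹*c*a) = c*a by group) (rfl : b = b),
        tcongr q (show a*(a⁻¹*c*a)*a⁻¹ = c by group) (rfl : a*b*a⁻¹ = a*b*a⁻¹)] at e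
    exact e
  have E3 : tmk G q c (a*b*a⁻¹)
      = tmk G q c (a*b*a⁻¹*b⁻¹)
        * tmk G q ((a*b*a⁻¹*b⁻¹)*c*(a*b*a⁻¹*b⁻¹)⁻¹)
            ((a*b*a⁻¹*b⁻¹)*b*(a*b*a⁻¹*b⁻¹)⁻¹) := by
    have e := rel2 q c (a*b*a⁻¹*b⁻¹) b
    rw [tcongr q (rfl : c = c) (show (a*b*a⁻¹*b⁻¹)*b = a*b*a⁻¹ by group)] at e
    exact e
  have E4 := conj_tmk q a b c b
  have key : tmk G q (c*a*c⁻¹) (c*b*c⁻¹) * tmk G q c b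
      = tmk G q c (a*b*a⁻¹*b⁻¹) * tmk G q a b * tmk G q c b := by
    rw [← E1, E2, E3, mul_assoc, E4]; group
  exact mul_right_cancel key



end QTensor

open QTensor commutatorElement in
/-- In `G ⊗^q G` one has `[g ⊗ h, g₁ ⊗ h₁] = [g,h] ⊗ [g₁,h₁]`. -/
theorem commutator_tmk (q : ℕ) (G : Type) [Group G] (g h g₁ h₁ : G) :
    ⁅tmk G q g h, tmk G q g₁ h₁⁆ =
      tmk G q (g * h * g⁻¹ * h⁻¹) (g₁ * h₁ * g₁⁻¹ * h₁⁻¹) := by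
  have e := conj_tmk q g h g₁ h₁
  have e2 := conj_eq_tmk_commutator q (g*h*g⁻¹*h⁻¹) g₁ h₁
  rw [commutatorElement_def]
  rw [show tmk G q g h * tmk G q g₁ h₁ * (tmk G q g h)⁻¹
      = tmk G q ((g*h*g⁻¹*h⁻¹)*g₁*(g*h*g⁻¹*h⁻¹)⁻¹)
          ((g*h*g⁻¹*h⁻¹)*h₁*(g*h*g⁻¹*h⁻¹)⁻¹) from by
    rw [← e]; group]
  rw [e2]; group
end
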